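/- Let $\lambda, \mu$ be $\ell$-tuples of partitions with $|\lambda| = |\mu|$ and $s \in \mathbb{Z}^\ell$. Suppose $s_j$ is sufficiently small for $(\lambda; s)$, i.e. $s_i - s_j \ge |\lambda|$ for all $i \ne j$, and that $|\lambda| \ge 1$. If the multiset $\{\lambda^{(d)}_a + s_d\}$ dominates the multiset $\{\mu^{(d)}_a + s_d\}$ in the sense of partial sums of decreasing rearrangements, and $\mu^{(j)} = \emptyset$, then $\lambda^{(j)} = \emptyset$. -/

import Mathlib

/-- The number of nonzero parts of a partition presented as a function `ℕ → ℕ`. -/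
noncomputable def plen (f : ℕ → ℕ) : ℕ := sInf {N | ∀ a, N ≤ a → f a = 0}

/-- The size (number of boxes) of a partition presented as a function `ℕ → ℕ`. -/
noncomputable def psize (f : ℕ → ℕ) : ℕ := ∑ a ∈ Finset.range (plen f), f a

/-- Total size of an `ℓ`-tuple of partitions. -/
noncomputable def totalSize (ℓ : ℕ) (lam : Fin ℓ → ℕ → ℕ) : ℕ := ∑ d, psize (lam d)

/-- The multiset `{λ^{(d)}_a + s_d : 1 ≤ d ≤ ℓ, 1 ≤ a ≤ max(l(λ^{(d)}), l(μ^{(d)}))}`. -/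
noncomputable def tildeMS (ℓ : ℕ) (lam mu : Fin ℓ → ℕ → ℕ) (s : Fin ℓ → ℤ) : Multiset ℤ :=
  (Finset.univ : Finset (Fin ℓ)).val.bind fun d =>
    (Multiset.range (max (plen (lam d)) (plen (mu d)))).map fun a => (lam d a : ℤ) + s d

/-- Partial sum of the first `r` entries of the decreasing rearrangement of a multiset. -/
def descPartial (A : Multiset ℤ) (r : ℕ) : ℤ := (((A.sort (· ≤ ·)).reverse).take r).sum

/-- Dominance of multisets via partial sums of decreasing rearrangements. -/
def Dominates (A B : Multiset ℤ) : Prop := ∀ r : ℕ, descPartial B r ≤ descPartial A r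

lemma descPartial_pred (A : Multiset ℤ) (h : 1 ≤ Multiset.card A) :
    ∃ x, x ∈ A ∧ (∀ y ∈ A, x ≤ y) ∧ descPartial A (Multiset.card A - 1) = A.sum - x := by
  set l := A.sort (· ≤ ·) with hl
  have hlen : l.length = Multiset.card A := Multiset.length_sort _
  have hsort : l.Pairwise (· ≤ ·) := Multiset.pairwise_sort _ _
  have hA : (l : Multiset ℤ) = A := Multiset.sort_eq _ _
  obtain ⟨hd, tl, hcons⟩ : ∃ hd tl, l = hd :: tl :=
    List.exists_cons_of_ne_nil (by
      intro hnil; rw [hnil] at hlen; simp at hlen; omega)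
  have hmem : hd ∈ A := by
    rw [← hA, hcons]; exact Multiset.mem_coe.mpr List.mem_cons_self
  refine ⟨hd, hmem, ?_, ?_⟩
  · intro y hy
    rw [← hA, Multiset.mem_coe, hcons, List.mem_cons] at hy
    rcases hy with rfl | hy
    · exact le_refl _
    · exact (List.pairwise_cons.mp (hcons ▸ hsort)).1 y hy
  · show (((l).reverse).take _).sum = _
    rw [hcons, List.reverse_cons]
    have hlen' : Multiset.card A - 1 = tl.length := by
      rw [hcons] at hlen; simp at hlen; omega
    rw [hlen']
    have : tl.length = tl.reverse.length := List.length_reverse.symm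
    rw [this, List.take_left]
    have hsum : A.sum = hd + tl.sum := by
      rw [← hA, hcons]; simp
    rw [List.sum_reverse, hsum]; ring

lemma plen_mem (f : ℕ → ℕ) (h : ∃ N, ∀ a, N ≤ a → f a = 0) :
    ∀ a, plen f ≤ a → f a = 0 := Nat.sInf_mem h

lemma sum_range_max_left (f : ℕ → ℕ) (h : ∃ N, ∀ a, N ≤ a → f a = 0) (c : ℕ)
    (hc : plen f ≤ c) : ∑ a ∈ Finset.range c, (f a : ℤ) = (psize f : ℤ) := by
  rw [psize, Nat.cast_sum]
  symm
  apply Finset.sum_subset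
  · exact Finset.range_subset_range.mpr hc
  · intro x _ hx
    rw [Finset.mem_range, not_lt] at hx
    rw [plen_mem f h x hx]; simp

lemma tildeMS_card (ℓ : ℕ) (lam mu : Fin ℓ → ℕ → ℕ) (s : Fin ℓ → ℤ) :
    Multiset.card (tildeMS ℓ lam mu s) = ∑ d, max (plen (lam d)) (plen (mu d)) := by
  simp [tildeMS, Multiset.card_bind, Finset.sum]

lemma tildeMS_sum (ℓ : ℕ) (lam mu : Fin ℓ → ℕ → ℕ) (s : Fin ℓ → ℤ)
    (h0 : ∀ d, ∃ N, ∀ a, N ≤ a → lam d a = 0) :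
    (tildeMS ℓ lam mu s).sum
      = (totalSize ℓ lam : ℤ) + ∑ d, (max (plen (lam d)) (plen (mu d)) : ℤ) * s d := by
  have : (tildeMS ℓ lam mu s).sum
      = ∑ d, ((Multiset.range (max (plen (lam d)) (plen (mu d)))).map
          fun a => (lam d a : ℤ) + s d).sum := by
    rw [tildeMS, Multiset.sum_bind]; rfl
  rw [this, totalSize, Nat.cast_sum, ← Finset.sum_add_distrib]
  apply Finset.sum_congr rfl
  intro d _
  have : ((Multiset.range (max (plen (lam d)) (plen (mu d)))).map
      fun a => (lam d a : ℤ) + s d).sum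
      = ∑ a ∈ Finset.range (max (plen (lam d)) (plen (mu d))), ((lam d a : ℤ) + s d) := rfl
  rw [this, Finset.sum_add_distrib, Finset.sum_const, Finset.card_range,
    sum_range_max_left (lam d) (h0 d) _ (le_max_left _ _)]
  rw [nsmul_eq_mul, Nat.cast_max]


/-- If `s_j` is sufficiently small for `(λ; s)`, `|λ| = |μ| ≥ 1`, the multiset
`{λ^{(d)}_a + s_d}` dominates `{μ^{(d)}_a + s_d}`, and `μ^{(j)} = ∅`, then `λ^{(j)} = ∅`. -/
theorem stmt2 (ℓ : ℕ) (hℓ : 1 ≤ ℓ) (lam mu : Fin ℓ → ℕ → ℕ)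
    (hlam : ∀ d, Antitone (lam d)) (hmu : ∀ d, Antitone (mu d))
    (hlam0 : ∀ d, ∃ N, ∀ a, N ≤ a → lam d a = 0)
    (hmu0 : ∀ d, ∃ N, ∀ a, N ≤ a → mu d a = 0)
    (s : Fin ℓ → ℤ) (j : Fin ℓ)
    (hsize : totalSize ℓ lam = totalSize ℓ mu)
    (hpos : 1 ≤ totalSize ℓ lam)
    (hsmall : ∀ i, i ≠ j → (totalSize ℓ lam : ℤ) ≤ s i - s j)
    (hdom : Dominates (tildeMS ℓ lam mu s) (tildeMS ℓ mu lam s))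
    (hmuj : ∀ a, mu j a = 0) :
    ∀ a, lam j a = 0 := by
  suffices hL0 : plen (lam j) = 0 by
    intro a
    exact plen_mem (lam j) (hlam0 j) a (hL0 ▸ Nat.zero_le a)
  by_contra hL0
  have hL1 : 1 ≤ plen (lam j) := Nat.one_le_iff_ne_zero.mpr hL0
  have hmuL : plen (mu j) = 0 := Nat.sInf_eq_zero.mpr (Or.inl fun a _ => hmuj a)
  -- positivity of lam j on [0, plen)
  have hlampos : ∀ a, a < plen (lam j) → 1 ≤ lam j a := by
    intro a ha
    have h1 : ¬ ∀ b, plen (lam j) - 1 ≤ b → lam j b = 0 := by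
      intro hmem
      have h2 : plen (lam j) ≤ plen (lam j) - 1 := Nat.sInf_le hmem
      omega
    push_neg at h1
    obtain ⟨b, hb1, hb2⟩ := h1
    have hab : lam j b ≤ lam j a := hlam j (by omega)
    omega
  set A := tildeMS ℓ lam mu s with hAdef
  set B := tildeMS ℓ mu lam s with hBdef
  -- cards agree
  have hcardA : Multiset.card A = ∑ d, max (plen (lam d)) (plen (mu d)) :=
    tildeMS_card ℓ lam mu s
  have hcardB : Multiset.card B = Multiset.card A := by
    rw [hcardA, tildeMS_card]
    exact Finset.sum_congr rfl fun d _ => max_comm _ _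
  have hcard1 : 1 ≤ Multiset.card A := by
    rw [hcardA]
    calc 1 ≤ max (plen (lam j)) (plen (mu j)) := le_trans hL1 (le_max_left _ _)
    _ ≤ ∑ d, max (plen (lam d)) (plen (mu d)) :=
        Finset.single_le_sum (f := fun d => max (plen (lam d)) (plen (mu d)))
          (fun d _ => Nat.zero_le _) (Finset.mem_univ j)
  -- sums agree
  have hsumAB : A.sum = B.sum := by
    rw [hAdef, hBdef, tildeMS_sum ℓ lam mu s hlam0, tildeMS_sum ℓ mu lam s hmu0,
      ← hsize]
    congr 1
    exact Finset.sum_congr rfl fun d _ => by rw [max_comm]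
  -- every element of A is at least s j + 1
  have hAbound : ∀ x ∈ A, s j + 1 ≤ x := by
    intro x hx
    rw [hAdef, tildeMS, Multiset.mem_bind] at hx
    obtain ⟨d, -, hx⟩ := hx
    rw [Multiset.mem_map] at hx
    obtain ⟨a, ha, rfl⟩ := hx
    rw [Multiset.mem_range] at ha
    by_cases hd : d = j
    · rw [hd] at ha ⊢
      rw [hmuL] at ha
      have ha' : a < plen (lam j) := by omega
      have := hlampos a ha'
      have h1 : (1 : ℤ) ≤ (lam j a : ℤ) := by exact_mod_cast this
      linarith
    · have h1 := hsmall d hd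
      have h2 : (1 : ℤ) ≤ (totalSize ℓ lam : ℤ) := by exact_mod_cast hpos
      have h3 : (0 : ℤ) ≤ (lam d a : ℤ) := Int.natCast_nonneg _
      linarith
  -- s j is an element of B
  have hsjB : s j ∈ B := by
    rw [hBdef, tildeMS, Multiset.mem_bind]
    refine ⟨j, by simp, ?_⟩
    rw [Multiset.mem_map]
    refine ⟨0, ?_, ?_⟩
    · rw [Multiset.mem_range, hmuL]
      simp; omega
    · rw [hmuj 0]; simp
  obtain ⟨xA, hxAmem, -, hdA⟩ := descPartial_pred A hcard1
  obtain ⟨xB, -, hxBmin, hdB⟩ := descPartial_pred B (hcardB ▸ hcard1)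
  have hd := hdom (Multiset.card A - 1)
  rw [hdA, ← hcardB, hdB] at hd
  have h1 := hAbound xA hxAmem
  have h2 := hxBmin (s j) hsjB
  linarith [hsumAB ▸ hd]
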